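/- arXiv:math/0511100 — 4 statements merged into one kernel-verified Lean document; each statement's English description precedes it below -/
import Mathlib

section
/- Let R be a Dedekind domain, G an affine flat R-group scheme, and M an R-flat G-module such that H^1(G,M) is a flat R-module. Then for every R-algebra S the canonical map ρ_S: S ⊗_R M^G → (S ⊗_R M)^{S⊗G}, s ⊗ m ↦ s ⊗ m, is an isomorphism. -/
open TensorProduct

noncomputable section

/-- The `R`-linear map `m ↦ m ⊗ₜ 1`. -/
def tmulOne (R M C : Type*) [CommRing R] [CommRing C] [Algebra R C]
    [AddCommGroup M] [Module R M] : M →ₗ[R] M ⊗[R] C :=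
  (TensorProduct.mk R M C).flip 1

/-- The invariants `M^G = {m | ω m = m ⊗ 1}` of a `C`-comodule `M`, where `C = R[G]`. -/
def comodInvariants {R C M : Type*} [CommRing R] [CommRing C] [Algebra R C]
    [AddCommGroup M] [Module R M] (ω : M →ₗ[R] M ⊗[R] C) : Submodule R M :=
  LinearMap.ker (ω - tmulOne R M C)

/-- The invariants `(S ⊗ M)^{S ⊗ G}` of the base-changed comodule `S ⊗ M` over `S ⊗ C`
(under the canonical identification `(S ⊗ M) ⊗[S] (S ⊗ C) ≃ S ⊗ (M ⊗ C)`). -/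
def comodInvariantsBaseChange {R C M : Type*} [CommRing R] [CommRing C] [Algebra R C]
    [AddCommGroup M] [Module R M] (ω : M →ₗ[R] M ⊗[R] C)
    (S : Type*) [CommRing S] [Algebra R S] : Submodule S (S ⊗[R] M) :=
  LinearMap.ker ((ω - tmulOne R M C).baseChange S)

/-- The canonical map `ρ_S : S ⊗ M^G → (S ⊗ M)^{S⊗G}`, `s ⊗ m ↦ s ⊗ m`. -/
def rhoMap {R C M : Type*} [CommRing R] [CommRing C] [Algebra R C]
    [AddCommGroup M] [Module R M] (ω : M →ₗ[R] M ⊗[R] C)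
    (S : Type*) [CommRing S] [Algebra R S] :
    S ⊗[R] ↥(comodInvariants ω) →ₗ[S] ↥(comodInvariantsBaseChange ω S) :=
  LinearMap.codRestrict _ ((comodInvariants ω).subtype.baseChange S) (fun x => by
    have h0 : (ω - tmulOne R M C) ∘ₗ (comodInvariants ω).subtype = 0 := by
      ext m
      exact m.2
    have h : ((ω - tmulOne R M C).baseChange S) ∘ₗ
        ((comodInvariants ω).subtype.baseChange S) = 0 := by
      rw [← LinearMap.baseChange_comp, h0]
      ext v
      simp
    simp only [comodInvariantsBaseChange, LinearMap.mem_ker]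
    exact congrFun (congrArg (fun f => f.toFun) h) x)

/-- The map `φ_S : S ⊗ V → (S ⊗ M)^{S⊗G}` induced by `φ : V → M^G`,
`φ_S (s ⊗ v) = s ⊗ φ v`. -/
def phiMap {R C M V : Type*} [CommRing R] [CommRing C] [Algebra R C]
    [AddCommGroup M] [Module R M] [AddCommGroup V] [Module R V]
    (ω : M →ₗ[R] M ⊗[R] C) (φ : V →ₗ[R] ↥(comodInvariants ω))
    (S : Type*) [CommRing S] [Algebra R S] :
    S ⊗[R] V →ₗ[S] ↥(comodInvariantsBaseChange ω S) :=
  (rhoMap ω S) ∘ₗ (φ.baseChange S)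


/-! ### Auxiliary homological lemmas -/

section Purity

open LinearMap

variable {R : Type*} [CommRing R]

private lemma purity_aux
    {A B Q N F : Type*} [AddCommGroup A] [AddCommGroup B] [AddCommGroup Q] [AddCommGroup N]
    [AddCommGroup F] [Module R A] [Module R B] [Module R Q] [Module R N] [Module R F]
    [Module.Flat R F]
    (f : A →ₗ[R] B) (g : B →ₗ[R] Q) (hf : Function.Injective f)
    (hfg : Function.Exact f g) (hg : Function.Surjective g) [Module.Flat R Q]
    (π : F →ₗ[R] N) (hπ : Function.Surjective π) :
    Function.Injective (lTensor N f) := by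
  rw [injective_iff_map_eq_zero]
  intro t ht
  set L := LinearMap.ker π with hL
  obtain ⟨t', ht'⟩ := rTensor_surjective A (g := π) hπ t
  have h1 : rTensor B π (lTensor F f t') = 0 := by
    rw [← comp_apply, rTensor_comp_lTensor, ← lTensor_comp_rTensor, comp_apply, ht', ht]
  have hexπ : Function.Exact (L.subtype) π :=
    LinearMap.exact_iff.mpr (Submodule.range_subtype L).symm
  have hex2 : Function.Exact (rTensor B (Submodule.subtype L)) (rTensor B π) :=
    rTensor_exact (R := R) (M := ↥L) (N := F) (P := N) B hexπ hπ
  obtain ⟨s, hs⟩ := (hex2 (lTensor F f t')).mp h1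
  have h2 : lTensor (↥L) g s = 0 := by
    have hinj : Function.Injective (rTensor Q (Submodule.subtype L)) :=
      Module.Flat.rTensor_preserves_injective_linearMap _ (Submodule.injective_subtype L)
    apply hinj
    rw [map_zero, ← comp_apply, rTensor_comp_lTensor, ← lTensor_comp_rTensor, comp_apply, hs,
      ← comp_apply, ← lTensor_comp]
    rw [hfg.linearMap_comp_eq_zero, lTensor_zero, LinearMap.zero_apply]
  have hex3 : Function.Exact (lTensor (↥L) f) (lTensor (↥L) g) :=
    lTensor_exact (R := R) (M := A) (N := B) (P := Q) (↥L) hfg hg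
  obtain ⟨u, hu⟩ := (hex3 s).mp h2
  have h4 : t' = rTensor A (Submodule.subtype L) u := by
    have hinjF : Function.Injective (lTensor F f) :=
      Module.Flat.lTensor_preserves_injective_linearMap f hf
    apply hinjF
    rw [← comp_apply, lTensor_comp_rTensor, ← rTensor_comp_lTensor, comp_apply, hu, hs]
  have h5 : π ∘ₗ Submodule.subtype L = 0 := by ext x; exact x.2
  rw [← ht', h4, ← comp_apply, ← rTensor_comp, h5, rTensor_zero, LinearMap.zero_apply]

/-- Purity: if `0 → A → B → Q → 0` is exact with `Q` flat, then `N ⊗ A → N ⊗ B` is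
injective for every module `N`. -/
lemma lTensor_injective_of_flat_coker
    {A B Q N : Type*} [AddCommGroup A] [AddCommGroup B] [AddCommGroup Q] [AddCommGroup N]
    [Module R A] [Module R B] [Module R Q] [Module R N]
    (f : A →ₗ[R] B) (g : B →ₗ[R] Q) (hf : Function.Injective f)
    (hfg : Function.Exact f g) (hg : Function.Surjective g) [Module.Flat R Q] :
    Function.Injective (lTensor N f) :=
  purity_aux f g hf hfg hg (Finsupp.linearCombination R (_root_.id : N → N))
    (Finsupp.linearCombination_surjective R Function.surjective_id)

lemma lid_conj' {A B : Type*} [AddCommGroup A] [AddCommGroup B] [Module R A] [Module R B]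
    (f : A →ₗ[R] B) :
    lTensor R f = ((TensorProduct.lid R B).symm.toLinearMap) ∘ₗ f ∘ₗ
      (TensorProduct.lid R A).toLinearMap := by
  apply TensorProduct.ext'
  intro r a
  simp only [lTensor_tmul, coe_comp, LinearEquiv.coe_coe, Function.comp_apply,
    TensorProduct.lid_tmul, map_smul, TensorProduct.lid_symm_apply,
    TensorProduct.smul_tmul', smul_eq_mul, mul_one]

lemma lTensor_ring_injective {A B : Type*} [AddCommGroup A] [AddCommGroup B] [Module R A]
    [Module R B] {f : A →ₗ[R] B} (hf : Function.Injective f) :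
    Function.Injective (lTensor R f) := by
  rw [lid_conj']
  simp only [coe_comp, LinearEquiv.coe_coe]
  exact (TensorProduct.lid R B).symm.injective.comp (hf.comp (TensorProduct.lid R A).injective)

/-- An extension of a flat module by a flat module is flat. -/
lemma flat_of_extension {A B C : Type*} [AddCommGroup A] [Module R A] [AddCommGroup B]
    [Module R B] [AddCommGroup C] [Module R C] [Module.Flat R A] [Module.Flat R C]
    (f : A →ₗ[R] B) (g : B →ₗ[R] C) (hf : Function.Injective f) (hg : Function.Surjective g)
    (hfg : Function.Exact f g) : Module.Flat R B := by
  rw [Module.Flat.iff_rTensor_injective']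
  intro I
  rw [injective_iff_map_eq_zero]
  intro x hx
  have hCinj : Function.Injective (rTensor C I.subtype) :=
    (Module.Flat.iff_rTensor_injective' (R := R) (M := C)).mp inferInstance I
  have h1 : lTensor (↥I) g x = 0 := by
    apply hCinj
    rw [map_zero, ← comp_apply, rTensor_comp_lTensor, ← lTensor_comp_rTensor, comp_apply, hx,
      map_zero]
  have hex : Function.Exact (lTensor (↥I) f) (lTensor (↥I) g) :=
    lTensor_exact (R := R) (M := A) (N := B) (P := C) (↥I) hfg hg
  obtain ⟨a, hac⟩ := (hex x).mp h1
  have hAinj : Function.Injective (rTensor A I.subtype) :=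
    (Module.Flat.iff_rTensor_injective' (R := R) (M := A)).mp inferInstance I
  have hRf : Function.Injective (lTensor R f) := lTensor_ring_injective hf
  have h2 : rTensor A I.subtype a = 0 := by
    apply hRf
    rw [map_zero, ← comp_apply, lTensor_comp_rTensor, ← rTensor_comp_lTensor, comp_apply, hac, hx]
  have h3 : a = 0 := hAinj (by rw [h2, map_zero])
  rw [← hac, h3, map_zero]

end Purity

section DedekindFlat

open LinearMap

variable {R : Type*} [CommRing R] [IsDomain R] [IsDedekindDomain R]

/-- Over a Dedekind domain, every ideal is a flat module. -/
lemma ideal_flat (I : Ideal R) : Module.Flat R ↥I := by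
  rcases eq_or_ne I ⊥ with rfl | hI
  · haveI : Subsingleton ↥(⊥ : Ideal R) := by
      constructor; rintro ⟨a, ha⟩ ⟨b, hb⟩
      simp only [Ideal.mem_bot] at ha hb
      simp [ha, hb]
    infer_instance
  · set K := FractionRing R
    set J : FractionalIdeal (nonZeroDivisors R) K := (I : FractionalIdeal (nonZeroDivisors R) K)
      with hJ
    have hJ0 : J ≠ 0 := by simpa [hJ] using hI
    have hmul : J * J⁻¹ = 1 := mul_inv_cancel₀ hJ0
    have hone : (1 : K) ∈ (J : Submodule R K) * ((J⁻¹ : FractionalIdeal (nonZeroDivisors R) K) :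
        Submodule R K) := by
      have h1 : (1 : K) ∈ ((J * J⁻¹ : FractionalIdeal (nonZeroDivisors R) K) : Submodule R K) := by
        rw [hmul]; exact FractionalIdeal.one_mem_one _
      rwa [FractionalIdeal.coe_mul] at h1
    have hdec : ∃ (n : ℕ) (a b : Fin n → K),
        (∀ i, a i ∈ (J : Submodule R K)) ∧ (∀ i, b i ∈ ((J⁻¹ : FractionalIdeal _ K) :
          Submodule R K)) ∧ ∑ i, a i * b i = 1 := by
      refine Submodule.mul_induction_on hone ?_ ?_
      · intro m hm n hn
        exact ⟨1, fun _ => m, fun _ => n, fun _ => hm, fun _ => hn, by simp⟩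
      · rintro x y ⟨n₁, a₁, b₁, ha₁, hb₁, hs₁⟩ ⟨n₂, a₂, b₂, ha₂, hb₂, hs₂⟩
        refine ⟨n₁ + n₂, Fin.append a₁ a₂, Fin.append b₁ b₂, ?_, ?_, ?_⟩
        · intro i
          refine Fin.addCases (fun j => ?_) (fun j => ?_) i
          · rw [Fin.append_left]; exact ha₁ j
          · rw [Fin.append_right]; exact ha₂ j
        · intro i
          refine Fin.addCases (fun j => ?_) (fun j => ?_) i
          · rw [Fin.append_left]; exact hb₁ j
          · rw [Fin.append_right]; exact hb₂ j
        · rw [Fin.sum_univ_add]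
          simp only [Fin.append_left, Fin.append_right]
          rw [hs₁, hs₂]
    obtain ⟨n, a, b, ha, hb, hsum⟩ := hdec
    have halg : Function.Injective (Algebra.linearMap R K) := IsFractionRing.injective R K
    have ha' : ∀ i, ∃ x : R, x ∈ I ∧ algebraMap R K x = a i := by
      intro i
      have := ha i
      rw [FractionalIdeal.mem_coe, hJ, FractionalIdeal.mem_coeIdeal] at this
      exact this
    choose a' ha'I ha'eq using ha'
    have hbmem : ∀ i (x : ↥I), b i * algebraMap R K (x : R) ∈
        LinearMap.range (Algebra.linearMap R K) := by
      intro i x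
      have hb' := hb i
      rw [FractionalIdeal.mem_coe, FractionalIdeal.mem_inv_iff hJ0] at hb'
      have hx : algebraMap R K (x : R) ∈ J := by
        rw [hJ]
        exact FractionalIdeal.mem_coeIdeal_of_mem _ x.2
      obtain ⟨y, hy⟩ := (FractionalIdeal.mem_one_iff _).mp (hb' _ hx)
      exact ⟨y, hy⟩
    set gi : (i : Fin n) → (↥I →ₗ[R] K) := fun i =>
      { toFun := fun x => b i * algebraMap R K (x : R)
        map_add' := by intro x y; simp [mul_add]
        map_smul' := by
          intro r x
          simp only [Submodule.coe_smul, smul_eq_mul, map_mul, RingHom.id_apply]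
          rw [Algebra.smul_def]
          ring } with hgi
    set φ : (i : Fin n) → (↥I →ₗ[R] R) := fun i =>
      ((LinearEquiv.ofInjective (Algebra.linearMap R K) halg).symm.toLinearMap) ∘ₗ
        LinearMap.codRestrict (LinearMap.range (Algebra.linearMap R K)) (gi i)
          (fun x => hbmem i x) with hφ
    have key : ∀ i (x : ↥I), algebraMap R K (φ i x) = b i * algebraMap R K (x : R) := by
      intro i x
      have h2 : ((LinearEquiv.ofInjective (Algebra.linearMap R K) halg)
          ((LinearEquiv.ofInjective (Algebra.linearMap R K) halg).symm
            (LinearMap.codRestrict (LinearMap.range (Algebra.linearMap R K)) (gi i)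
              (fun x => hbmem i x) x)) : K) = gi i x := by
        rw [LinearEquiv.apply_symm_apply]; rfl
      conv_rhs => rw [show b i * algebraMap R K (x : R) = gi i x from rfl]
      rw [← h2, LinearEquiv.ofInjective_apply]
      rfl
    set rr : (Fin n → R) →ₗ[R] ↥I :=
      ∑ i : Fin n, (LinearMap.proj i : (Fin n → R) →ₗ[R] R).smulRight (⟨a' i, ha'I i⟩ : ↥I)
      with hrr
    have hretr : rr.comp (LinearMap.pi φ) = LinearMap.id := by
      ext x
      apply halg
      simp only [LinearMap.coe_comp, Function.comp_apply, LinearMap.id_coe, id_eq]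
      rw [hrr]
      simp only [LinearMap.coe_sum, Finset.sum_apply, LinearMap.smulRight_apply,
        LinearMap.proj_apply, LinearMap.pi_apply]
      rw [Submodule.coe_sum]
      simp only [SetLike.val_smul, smul_eq_mul, Algebra.linearMap_apply, map_sum, map_mul]
      calc ∑ i : Fin n, algebraMap R K (φ i x) * algebraMap R K (a' i)
          = ∑ i : Fin n, (a i * b i) * algebraMap R K (x : R) := by
            refine Finset.sum_congr rfl fun i _ => ?_
            rw [key, ha'eq]
            ring
        _ = algebraMap R K (x : R) := by rw [← Finset.sum_mul, hsum, one_mul]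
    exact Module.Flat.of_retract (LinearMap.pi φ) rr hretr

/-- Over a Dedekind domain, a module admitting an injection into a flat module is flat. -/
lemma flat_of_injective {F N : Type*} [AddCommGroup F] [Module R F] [AddCommGroup N]
    [Module R N] [Module.Flat R F] (f : N →ₗ[R] F) (hf : Function.Injective f) :
    Module.Flat R N := by
  rw [Module.Flat.iff_rTensor_injective']
  intro I
  haveI := ideal_flat I
  have inj1 : Function.Injective (lTensor (↥I) f) :=
    Module.Flat.lTensor_preserves_injective_linearMap f hf
  have inj2 : Function.Injective (rTensor F I.subtype) :=
    (Module.Flat.iff_rTensor_injective' (R := R) (M := F)).mp inferInstance I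
  have hcomp : (rTensor F I.subtype) ∘ₗ (lTensor (↥I) f) =
      (lTensor R f) ∘ₗ (rTensor N I.subtype) := by
    rw [rTensor_comp_lTensor, lTensor_comp_rTensor]
  have hinj : Function.Injective ((rTensor F I.subtype) ∘ₗ (lTensor (↥I) f)) := by
    rw [coe_comp]
    exact inj2.comp inj1
  rw [hcomp, coe_comp] at hinj
  exact hinj.of_comp

end DedekindFlat

universe u v

/-- The boundary map `δ⁰ = -ω + 1_M ⊗ u : M → M ⊗ C` of the cobar complex. -/
def cobarD0 {R C M : Type*} [CommRing R] [CommRing C] [Algebra R C]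
    [AddCommGroup M] [Module R M] (ω : M →ₗ[R] M ⊗[R] C) : M →ₗ[R] M ⊗[R] C :=
  tmulOne R M C - ω

/-- The boundary map `δ¹ = ω ⊗ 1_C - 1_M ⊗ Δ_C + 1_{M⊗C} ⊗ u : M ⊗ C → (M ⊗ C) ⊗ C`
of the cobar complex, where `Δ` is the comultiplication of `C`. -/
def cobarD1 {R C M : Type*} [CommRing R] [CommRing C] [Algebra R C]
    [AddCommGroup M] [Module R M] (ω : M →ₗ[R] M ⊗[R] C)
    (Δ : C →ₗ[R] C ⊗[R] C) : (M ⊗[R] C) →ₗ[R] (M ⊗[R] C) ⊗[R] C :=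
  LinearMap.rTensor C ω
    - (TensorProduct.assoc R M C C).symm.toLinearMap ∘ₗ LinearMap.lTensor M Δ
    + tmulOne R (M ⊗[R] C) C

/-- The first cohomology `H¹(G, M)` of the cobar complex
`M → M ⊗ C → (M ⊗ C) ⊗ C → ⋯` computing the `G`-cohomology of the comodule `M`. -/
abbrev cobarH1 {R C M : Type*} [CommRing R] [CommRing C] [Algebra R C]
    [AddCommGroup M] [Module R M] (ω : M →ₗ[R] M ⊗[R] C)
    (Δ : C →ₗ[R] C ⊗[R] C) : Type _ :=
  ↥(LinearMap.ker (cobarD1 ω Δ)) ⧸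
    ((LinearMap.range (cobarD0 ω)).comap (LinearMap.ker (cobarD1 ω Δ)).subtype)

set_option maxHeartbeats 1600000 in
set_option synthInstance.maxHeartbeats 400000 in
/-- Let `R` be a Dedekind domain, `G` an affine flat `R`-group scheme with flat Hopf algebra
`C = R[G]`, and `M` an `R`-flat `G`-module such that `H¹(G, M)` is a flat `R`-module.
Then for every `R`-algebra `S` the canonical map
`ρ_S : S ⊗ M^G → (S ⊗ M)^{S⊗G}`, `s ⊗ m ↦ s ⊗ m`, is an isomorphism. -/
theorem rhoMap_bijective_of_cobarH1_flat
    {R C M : Type*} [CommRing R] [IsDomain R] [IsDedekindDomain R]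
    [CommRing C] [HopfAlgebra R C] [Module.Flat R C]
    [AddCommGroup M] [Module R M] [Module.Flat R M]
    (ω : M →ₗ[R] M ⊗[R] C)
    (hcounit : ∀ m : M,
      (TensorProduct.rid R M) ((LinearMap.lTensor M (Coalgebra.counit (R := R) (A := C))) (ω m)) = m)
    (hcoassoc : ∀ m : M,
      (TensorProduct.assoc R M C C) ((LinearMap.rTensor C ω) (ω m)) =
        (LinearMap.lTensor M (Coalgebra.comul (R := R) (A := C))) (ω m))
    (hflat : Module.Flat R (cobarH1 ω (Coalgebra.comul (R := R) (A := C))))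
    (S : Type v) [CommRing S] [Algebra R S] :
    Function.Bijective (rhoMap ω S) := by
  classical
  set f0 : M →ₗ[R] M ⊗[R] C := ω - tmulOne R M C with hf0
  -- the cobar differential kills the image of `f0`
  have hd1f : ∀ m : M, cobarD1 ω (Coalgebra.comul (R := R) (A := C)) (f0 m) = 0 := by
    intro m
    have hassoc : (TensorProduct.assoc R M C C).symm
        ((LinearMap.lTensor M (Coalgebra.comul (R := R) (A := C))) (ω m))
        = (LinearMap.rTensor C ω) (ω m) := by
      rw [← hcoassoc m, LinearEquiv.symm_apply_apply]
    have hΔ1 : (LinearMap.lTensor M (Coalgebra.comul (R := R) (A := C))) (m ⊗ₜ[R] (1 : C))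
        = m ⊗ₜ[R] ((1 : C) ⊗ₜ[R] (1 : C)) := by
      rw [LinearMap.lTensor_tmul, Bialgebra.comul_one, Algebra.TensorProduct.one_def]
    have hfm : f0 m = ω m - m ⊗ₜ[R] (1 : C) := rfl
    rw [hfm]
    simp only [cobarD1, LinearMap.sub_apply, LinearMap.add_apply, LinearMap.coe_comp,
      LinearEquiv.coe_coe, Function.comp_apply, map_sub, hassoc, hΔ1,
      TensorProduct.assoc_symm_tmul, LinearMap.rTensor_tmul, tmulOne,
      LinearMap.flip_apply, TensorProduct.mk_apply]
    abel
  -- ranges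
  have hr : LinearMap.range f0 = LinearMap.range (cobarD0 ω) := by
    have h : cobarD0 ω = -f0 := by
      rw [hf0]; unfold cobarD0; rw [neg_sub]
    rw [h, LinearMap.range_neg]
  have hle : LinearMap.range f0 ≤ LinearMap.ker (cobarD1 ω (Coalgebra.comul (R := R) (A := C))) := by
    rintro _ ⟨m, rfl⟩
    exact hd1f m
  -- flatness of the various pieces
  haveI hfl1 : Module.Flat R ↥(LinearMap.range f0) :=
    flat_of_injective (LinearMap.range f0).subtype (Submodule.injective_subtype _)
  haveI hfl2 : Module.Flat R (M ⧸ (comodInvariants ω)) :=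
    Module.Flat.of_linearEquiv
      (f0.quotKerEquivRange)
  haveI hfl3 : Module.Flat R
      ↥(LinearMap.range (cobarD1 ω (Coalgebra.comul (R := R) (A := C)))) :=
    flat_of_injective (LinearMap.range _).subtype (Submodule.injective_subtype _)
  haveI hfl4 : Module.Flat R
      ((M ⊗[R] C) ⧸ LinearMap.ker (cobarD1 ω (Coalgebra.comul (R := R) (A := C)))) :=
    Module.Flat.of_linearEquiv
      ((cobarD1 ω (Coalgebra.comul (R := R) (A := C))).quotKerEquivRange)
  haveI := hflat
  -- the cokernel of `f0` is flat, being an extension of flat modules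
  set N1 := LinearMap.ker (cobarD1 ω (Coalgebra.comul (R := R) (A := C))) with hN1
  set N0 := LinearMap.range f0 with hN0
  have hαle : (LinearMap.range (cobarD0 ω)).comap N1.subtype ≤
      LinearMap.ker (N0.mkQ ∘ₗ N1.subtype) := by
    intro x hx
    rw [Submodule.mem_comap, ← hr] at hx
    rw [LinearMap.mem_ker, LinearMap.comp_apply, Submodule.mkQ_apply,
      Submodule.Quotient.mk_eq_zero]
    exact hx
  set α : cobarH1 ω (Coalgebra.comul (R := R) (A := C)) →ₗ[R] ((M ⊗[R] C) ⧸ N0) :=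
    Submodule.liftQ _ (N0.mkQ ∘ₗ N1.subtype) hαle with hα
  set β : ((M ⊗[R] C) ⧸ N0) →ₗ[R] ((M ⊗[R] C) ⧸ N1) :=
    Submodule.liftQ N0 N1.mkQ (by rw [Submodule.ker_mkQ]; exact hle) with hβ
  have hαinj : Function.Injective α := by
    rw [injective_iff_map_eq_zero]
    intro z hz
    obtain ⟨w, rfl⟩ := Submodule.Quotient.mk_surjective _ z
    rw [hα, Submodule.liftQ_apply, LinearMap.comp_apply, Submodule.mkQ_apply,
      Submodule.Quotient.mk_eq_zero] at hz
    rw [Submodule.Quotient.mk_eq_zero]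
    rw [Submodule.mem_comap, ← hr]
    exact hz
  have hβsurj : Function.Surjective β := by
    intro z
    obtain ⟨w, rfl⟩ := Submodule.Quotient.mk_surjective _ z
    exact ⟨N0.mkQ w, by rw [hβ, Submodule.mkQ_apply, Submodule.liftQ_apply, Submodule.mkQ_apply]⟩
  have hexαβ : Function.Exact α β := by
    intro z
    obtain ⟨w, rfl⟩ := Submodule.Quotient.mk_surjective N0 z
    constructor
    · intro h0
      have hw : w ∈ N1 := by
        rw [hβ, Submodule.liftQ_apply, Submodule.mkQ_apply, Submodule.Quotient.mk_eq_zero] at h0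
        exact h0
      refine ⟨Submodule.Quotient.mk (⟨w, hw⟩ : ↥N1), ?_⟩
      rw [hα, Submodule.liftQ_apply, LinearMap.comp_apply, Submodule.mkQ_apply]
      rfl
    · rintro ⟨y, hy⟩
      obtain ⟨v, rfl⟩ := Submodule.Quotient.mk_surjective _ y
      rw [hα, Submodule.liftQ_apply, LinearMap.comp_apply, Submodule.mkQ_apply] at hy
      rw [← hy, hβ, Submodule.liftQ_apply, Submodule.mkQ_apply, Submodule.Quotient.mk_eq_zero]
      exact v.2
  haveI hfl5 : Module.Flat R ((M ⊗[R] C) ⧸ N0) :=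
    flat_of_extension α β hαinj hβsurj hexαβ
  -- now the two halves of bijectivity
  have hsub_inj : Function.Injective ((comodInvariants ω).subtype.baseChange S) := by
    rw [LinearMap.baseChange_eq_ltensor]
    exact lTensor_injective_of_flat_coker (comodInvariants ω).subtype
      (comodInvariants ω).mkQ (Submodule.injective_subtype _)
      (LinearMap.exact_subtype_mkQ _) (Submodule.mkQ_surjective _)
  constructor
  · intro x y hxy
    exact hsub_inj (congrArg Subtype.val hxy)
  · rintro ⟨x, hx⟩
    have hx0 : (f0.baseChange S) x = 0 := hx
    have hdecomp : N0.subtype ∘ₗ f0.rangeRestrict = f0 := by ext m; rfl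
    have hNinj : Function.Injective (N0.subtype.baseChange S) := by
      rw [LinearMap.baseChange_eq_ltensor]
      exact lTensor_injective_of_flat_coker N0.subtype N0.mkQ (Submodule.injective_subtype _)
        (LinearMap.exact_subtype_mkQ _) (Submodule.mkQ_surjective _)
    have h1 : (f0.rangeRestrict.baseChange S) x = 0 := by
      apply hNinj
      rw [map_zero, ← LinearMap.comp_apply, ← LinearMap.baseChange_comp, hdecomp, hx0]
    have hexact0 : Function.Exact (comodInvariants ω).subtype f0.rangeRestrict := by
      rw [LinearMap.exact_iff, LinearMap.ker_rangeRestrict, Submodule.range_subtype]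
      rfl
    have hexactS : Function.Exact (LinearMap.lTensor S (comodInvariants ω).subtype)
        (LinearMap.lTensor S f0.rangeRestrict) :=
      lTensor_exact (R := R) (M := ↥(comodInvariants ω)) (N := M) (P := ↥N0) S hexact0
        f0.surjective_rangeRestrict
    have h1' : (LinearMap.lTensor S f0.rangeRestrict) x = 0 := by
      rw [← LinearMap.baseChange_eq_ltensor]
      exact h1
    obtain ⟨y, hy⟩ := (hexactS x).mp h1'
    refine ⟨y, ?_⟩
    apply Subtype.ext
    show ((comodInvariants ω).subtype.baseChange S) y = x
    rw [LinearMap.baseChange_eq_ltensor]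
    exact hy
end
end

section
/- Let R be a discrete valuation ring with uniformizer t, A a Noetherian R-algebra, V a finitely generated A-module, M a torsion-free R-module, and φ: V → M an R-linear map such that the induced map V/tV → M ⊗_R R/tR (or equivalently, the map sending the class of v to the class of φ(v)) is injective. Then V is torsion-free, hence flat, as an R-module. -/
open Submodule

/-- A torsion-free module over a PID (in fact any domain where we do it by hand via
principal ideals) is flat; here stated for a domain that is a PIR. -/
theorem flat_of_torsionFree {R V : Type*} [CommRing R] [IsDomain R] [IsPrincipalIdealRing R]
    [AddCommGroup V] [Module R V]
    (h : ∀ (r : R) (v : V), r • v = 0 → r = 0 ∨ v = 0) : Module.Flat R V := by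
  rw [Module.Flat.iff_rTensor_injective']
  intro I
  obtain ⟨x, hx⟩ : I.IsPrincipal := inferInstance
  rcases eq_or_ne x 0 with rfl | hx0
  · -- I = ⊥, domain is subsingleton
    have hI : I = ⊥ := by simp [hx, Ideal.span_zero]
    subst hI
    intro a b hab
    have : ∀ z : TensorProduct R (⊥ : Ideal R) V, z = 0 := by
      intro z
      induction z using TensorProduct.induction_on with
      | zero => rfl
      | tmul i v =>
        have : i = 0 := Subtype.ext ((Submodule.mem_bot R).mp i.2)
        rw [this, TensorProduct.zero_tmul]
      | add a b ha hb => rw [ha, hb, add_zero]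
    rw [this a, this b]
  · have hxI : x ∈ I := hx ▸ Ideal.subset_span rfl
    let f : R →ₗ[R] I := LinearMap.toSpanSingleton R I ⟨x, hxI⟩
    have hf : Function.Bijective f := by
      constructor
      · intro a b hab
        have : a • x = b • x := congrArg Subtype.val hab
        simpa [smul_eq_mul, mul_comm] using mul_right_cancel₀ hx0 (by simpa [smul_eq_mul] using this)
      · rintro ⟨y, hy⟩
        rw [hx] at hy
        obtain ⟨c, rfl⟩ := Ideal.mem_span_singleton'.mp hy
        exact ⟨c, Subtype.ext rfl⟩
    intro a b hab
    have key : Function.Injective ((LinearMap.rTensor V I.subtype).comp (LinearMap.rTensor V f)) := by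
      have : (LinearMap.rTensor V I.subtype).comp (LinearMap.rTensor V f)
          = (TensorProduct.lid R V).symm.toLinearMap ∘ₗ
            (LinearMap.lsmul R V x) ∘ₗ (TensorProduct.lid R V).toLinearMap := by
        ext v
        simp [f, LinearMap.toSpanSingleton, TensorProduct.smul_tmul', smul_eq_mul]
      rw [this]
      intro u v huv
      simp only [LinearMap.coe_comp, Function.comp_apply, LinearEquiv.coe_coe,
        LinearMap.lsmul_apply] at huv
      have h1 := (TensorProduct.lid R V).symm.injective huv
      have h2 : x • ((TensorProduct.lid R V) u - (TensorProduct.lid R V) v) = 0 := by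
        rw [smul_sub, sub_eq_zero]; exact h1
      rcases h x _ h2 with h3 | h4
      · exact absurd h3 hx0
      · exact (TensorProduct.lid R V).injective (sub_eq_zero.mp h4)
    have hsurj : Function.Surjective (LinearMap.rTensor V f) :=
      LinearMap.rTensor_surjective V (g := f) hf.2
    obtain ⟨a', rfl⟩ := hsurj a
    obtain ⟨b', rfl⟩ := hsurj b
    exact congrArg _ (key hab)

/-- Let `R` be a discrete valuation ring with uniformizer `t`, `A` a Noetherian
`R`-algebra, `V` a finitely generated `A`-module, `M` an `R`-module with no nonzero
`t`-torsion, and `φ : V → M` an `R`-linear map such that the induced map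
`V/tV → M/tM` is injective. Then `V` is torsion-free, hence flat, as an `R`-module. -/
theorem torsionFree_flat_of_dvr
    {R A V M : Type*} [CommRing R] [IsDomain R] [IsDiscreteValuationRing R]
    (t : R) (ht : Irreducible t)
    [CommRing A] [Algebra R A] [IsNoetherianRing A]
    [AddCommGroup V] [Module R V] [Module A V] [IsScalarTower R A V] [Module.Finite A V]
    [AddCommGroup M] [Module R M]
    (hM : ∀ m : M, t • m = 0 → m = 0)
    (φ : V →ₗ[R] M)
    (hinj : ∀ v : V, (∃ m : M, φ v = t • m) → ∃ w : V, v = t • w) :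
    (∀ (r : R) (v : V), r • v = 0 → r = 0 ∨ v = 0) ∧ Module.Flat R V := by
  have hMpow : ∀ (n : ℕ) (m : M), t ^ n • m = 0 → m = 0 := by
    intro n
    induction n with
    | zero => intro m hm; simpa using hm
    | succ k ih =>
      intro m hm
      rw [pow_succ, mul_smul] at hm
      exact hM m (ih _ hm)
  -- the t-power torsion submodule as an A-submodule
  let N : Submodule A V :=
    { carrier := {v | ∃ n : ℕ, t ^ n • v = 0}
      zero_mem' := ⟨0, by simp⟩
      add_mem' := by
        rintro a b ⟨m, hm⟩ ⟨n, hn⟩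
        refine ⟨m + n, ?_⟩
        have ha : t ^ (m + n) • a = 0 := by rw [pow_add, mul_comm, mul_smul, hm, smul_zero]
        have hb : t ^ (m + n) • b = 0 := by rw [pow_add, mul_smul, hn, smul_zero]
        rw [smul_add, ha, hb, add_zero]
      smul_mem' := by
        rintro a v ⟨n, hn⟩
        exact ⟨n, by rw [smul_comm, hn, smul_zero]⟩ }
  have hN : ∀ v ∈ N, v = 0 := by
    have hfg : N.FG := IsNoetherian.noetherian N
    have hle : N ≤ (Ideal.span {algebraMap R A t}) • N := by
      rintro v ⟨n, hn⟩
      have hφv : φ v = 0 := by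
        apply hMpow n
        rw [← map_smul, hn, map_zero]
      obtain ⟨w, hw⟩ := hinj v ⟨0, by rw [hφv, smul_zero]⟩
      have hwN : w ∈ N := by
        refine ⟨n + 1, ?_⟩
        rw [pow_succ, mul_smul, ← hw, hn]
      have : v = (algebraMap R A t) • w := by rw [algebraMap_smul]; exact hw
      rw [this]
      exact Submodule.smul_mem_smul (Ideal.subset_span rfl) hwN
    obtain ⟨r, hr, hr'⟩ :=
      Submodule.exists_mem_and_smul_eq_self_of_fg_of_le_smul _ N hfg hle
    obtain ⟨c, hc⟩ := Ideal.mem_span_singleton'.mp hr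
    rintro v ⟨n, hn⟩
    have hrn : ∀ k : ℕ, v = r ^ k • v := by
      intro k
      induction k with
      | zero => simp
      | succ m ih =>
        calc v = r • v := (hr' v ⟨n, hn⟩).symm
        _ = r • (r ^ m • v) := by rw [← ih]
        _ = r ^ (m+1) • v := by rw [smul_smul, ← pow_succ']
    have := hrn n
    rw [← hc, mul_pow, mul_smul, ← map_pow, algebraMap_smul, hn, smul_zero] at this
    exact this
  have htf : ∀ (r : R) (v : V), r • v = 0 → r = 0 ∨ v = 0 := by
    intro r v hrv
    rcases eq_or_ne r 0 with rfl | hr0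
    · exact Or.inl rfl
    obtain ⟨n, u, hu⟩ := IsDiscreteValuationRing.eq_unit_mul_pow_irreducible hr0 ht
    right
    apply hN
    refine ⟨n, ?_⟩
    have h3 : (((u⁻¹ : Rˣ) : R) * ((u : R) * t ^ n)) • v = 0 := by
      rw [mul_smul, ← hu, hrv, smul_zero]
    rwa [← mul_assoc, Units.inv_mul, one_mul] at h3
  exact ⟨htf, flat_of_torsionFree htf⟩
end

section
/- Let R be a Dedekind domain, A a Noetherian R-algebra, V a finitely generated A-module, N a torsion-free R-module, and φ: V → N an R-linear map such that for every maximal ideal 𝔪 of R the induced map V/𝔪V → N/𝔪N is injective. Then V is a flat R-module. -/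
open TensorProduct LinearMap

/-- Elements of `I • W` admit a finite representation `∑ aᵢ • vᵢ`. -/
private lemma aux_smul_rep {R : Type*} {M : Type*} [CommRing R] [AddCommGroup M] [Module R M]
    {I : Ideal R} {W : Submodule R M} {x : M} (h : x ∈ I • W) :
    ∃ (n : ℕ) (a : Fin n → R) (v : Fin n → M), (∀ i, a i ∈ I) ∧ (∀ i, v i ∈ W) ∧
      x = ∑ i, a i • v i := by
  refine Submodule.smul_induction_on h ?_ ?_
  · intro r hr m hm
    exact ⟨1, fun _ => r, fun _ => m, fun _ => hr, fun _ => hm, by simp⟩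
  · rintro x y ⟨n, a, v, ha, hv, rfl⟩ ⟨m, b, w, hb, hw, rfl⟩
    refine ⟨n + m, Fin.append a b, Fin.append v w, ?_, ?_, ?_⟩
    · intro i
      refine Fin.addCases (fun j => ?_) (fun j => ?_) i
      · rw [Fin.append_left]; exact ha j
      · rw [Fin.append_right]; exact hb j
    · intro i
      refine Fin.addCases (fun j => ?_) (fun j => ?_) i
      · rw [Fin.append_left]; exact hv j
      · rw [Fin.append_right]; exact hw j
    · rw [Fin.sum_univ_add]
      simp only [Fin.append_left, Fin.append_right]

/-- Elements of `I * J` admit a finite representation `∑ aᵢ * bᵢ`. -/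
private lemma aux_mul_rep {R : Type*} [CommRing R] {I J : Ideal R} {x : R} (h : x ∈ I * J) :
    ∃ (n : ℕ) (a b : Fin n → R), (∀ i, a i ∈ I) ∧ (∀ i, b i ∈ J) ∧ x = ∑ i, a i * b i := by
  refine Submodule.mul_induction_on h ?_ ?_
  · intro r hr s hs
    exact ⟨1, fun _ => r, fun _ => s, fun _ => hr, fun _ => hs, by simp⟩
  · rintro x y ⟨n, a, b, ha, hb, rfl⟩ ⟨m, a', b', ha', hb', rfl⟩
    refine ⟨n + m, Fin.append a a', Fin.append b b', ?_, ?_, ?_⟩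
    · intro i
      refine Fin.addCases (fun j => ?_) (fun j => ?_) i
      · rw [Fin.append_left]; exact ha j
      · rw [Fin.append_right]; exact ha' j
    · intro i
      refine Fin.addCases (fun j => ?_) (fun j => ?_) i
      · rw [Fin.append_left]; exact hb j
      · rw [Fin.append_right]; exact hb' j
    · rw [Fin.sum_univ_add]
      simp only [Fin.append_left, Fin.append_right]

/-- A torsion-free module over a Dedekind domain is flat. -/
private lemma flat_of_torsionfree' {R : Type*} {M : Type*} [CommRing R] [IsDomain R]
    [IsDedekindDomain R] [AddCommGroup M] [Module R M]
    (hM : ∀ (r : R) (x : M), r • x = 0 → r = 0 ∨ x = 0) : Module.Flat R M := by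
  rw [Module.Flat.iff_rTensor_injective']
  intro I
  rcases eq_or_ne I ⊥ with rfl | hI
  · -- trivial case `I = ⊥`
    have hz : ∀ z : ((⊥ : Ideal R) ⊗[R] M), z = 0 := by
      intro z
      induction z using TensorProduct.induction_on with
      | zero => rfl
      | tmul c v =>
        have : c = 0 := Subtype.ext ((Submodule.mem_bot R).mp c.2)
        rw [this, zero_tmul]
      | add x y hx hy => rw [hx, hy, add_zero]
    intro x y _
    rw [hz x, hz y]
  · obtain ⟨r, hrI, hr0⟩ := Submodule.exists_mem_ne_zero_of_ne_bot hI
    obtain ⟨J, hJ⟩ : I ∣ Ideal.span {r} :=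
      Ideal.dvd_iff_le.mpr ((Ideal.span_singleton_le_iff_mem _).mpr hrI)
    have hrm : r ∈ I * J := by rw [← hJ]; exact Ideal.mem_span_singleton_self r
    obtain ⟨n, a, b, haI, hbJ, hr_eq⟩ := aux_mul_rep hrm
    -- the "division by r" functionals
    have hlin : ∀ i, ∃ f : I →ₗ[R] R, ∀ c : I, f c * r = b i * (c : R) := by
      intro i
      have key : ∀ c : I, ∃ d : R, d * r = b i * (c : R) := by
        intro c
        refine Ideal.mem_span_singleton'.mp ?_
        rw [hJ, mul_comm I J]
        exact Ideal.mul_mem_mul (hbJ i) c.2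
      choose d hd using key
      refine ⟨⟨⟨fun c => d c, ?_⟩, ?_⟩, hd⟩
      · intro c c'
        apply mul_right_cancel₀ hr0
        rw [add_mul, hd, hd, hd]
        push_cast
        ring
      · intro s c
        apply mul_right_cancel₀ hr0
        simp only [RingHom.id_apply, smul_eq_mul]
        rw [hd, mul_assoc, hd]
        simp only [SetLike.val_smul, smul_eq_mul]
        ring
    choose f hf using hlin
    set π : I ⊗[R] M →ₗ[R] M :=
      (TensorProduct.lid R M).toLinearMap ∘ₗ rTensor M I.subtype with hπdef
    set F : Fin n → (I ⊗[R] M →ₗ[R] M) :=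
      fun i => TensorProduct.lift ((LinearMap.lsmul R M) ∘ₗ f i) with hFdef
    have hF : ∀ i (x : I ⊗[R] M), r • F i x = b i • π x := by
      intro i x
      have h1 : (r • F i : I ⊗[R] M →ₗ[R] M) = b i • π := by
        apply TensorProduct.ext'
        intro c v
        simp only [LinearMap.smul_apply, hFdef, hπdef, TensorProduct.lift.tmul,
          LinearMap.coe_comp, Function.comp_apply, lsmul_apply, rTensor_tmul,
          LinearEquiv.coe_coe, Submodule.coe_subtype, lid_tmul]
        rw [smul_smul, smul_smul, mul_comm r, hf i c]
      calc r • F i x = (r • F i : I ⊗[R] M →ₗ[R] M) x := rfl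
        _ = (b i • π : I ⊗[R] M →ₗ[R] M) x := by rw [h1]
        _ = b i • π x := rfl
    have hid : ∀ x : I ⊗[R] M, x = ∑ i, (⟨a i, haI i⟩ : I) ⊗ₜ[R] F i x := by
      intro x
      have h2 : (LinearMap.id : I ⊗[R] M →ₗ[R] I ⊗[R] M) =
          ∑ i, (TensorProduct.mk R I M ⟨a i, haI i⟩) ∘ₗ F i := by
        apply TensorProduct.ext'
        intro c v
        have hsum : ∑ i, (f i) c * a i = (c : R) := by
          apply mul_left_cancel₀ hr0
          rw [Finset.mul_sum]
          calc ∑ i, r * ((f i) c * a i) = ∑ i, ((f i) c * r) * a i := by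
                refine Finset.sum_congr rfl fun i _ => ?_; ring
            _ = ∑ i, (b i * (c : R)) * a i := by
                refine Finset.sum_congr rfl fun i _ => ?_; rw [hf i c]
            _ = (∑ i, a i * b i) * (c : R) := by
                rw [Finset.sum_mul]
                exact Finset.sum_congr rfl fun i _ => by ring
            _ = r * (c : R) := by rw [← hr_eq]
        have hsub : (∑ i, (f i) c • (⟨a i, haI i⟩ : I)) = c := by
          apply Subtype.ext
          push_cast
          simpa [smul_eq_mul] using hsum
        simp only [LinearMap.id_apply, LinearMap.sum_apply, LinearMap.coe_comp,
          Function.comp_apply, TensorProduct.mk_apply, hFdef, TensorProduct.lift.tmul,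
          lsmul_apply]
        symm
        calc (∑ i, (⟨a i, haI i⟩ : I) ⊗ₜ[R] ((f i) c • v))
            = ∑ i, ((f i) c • (⟨a i, haI i⟩ : I)) ⊗ₜ[R] v := by
              refine Finset.sum_congr rfl fun i _ => ?_
              rw [tmul_smul, smul_tmul']
          _ = (∑ i, (f i) c • (⟨a i, haI i⟩ : I)) ⊗ₜ[R] v := by rw [sum_tmul]
          _ = c ⊗ₜ[R] v := by rw [hsub]
      have h3 := congrArg (fun g : I ⊗[R] M →ₗ[R] I ⊗[R] M => g x) h2
      simpa [LinearMap.sum_apply] using h3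
    rw [injective_iff_map_eq_zero]
    intro x hx
    have hπx : π x = 0 := by rw [hπdef]; simp [hx]
    have hFx : ∀ i, F i x = 0 := by
      intro i
      have := hF i x
      rw [hπx, smul_zero] at this
      exact (hM r _ this).resolve_left hr0
    rw [hid x]
    simp [hFx]

/-- If `M ⧸ T` is flat, then `T ∩ I • ⊤ ⊆ I • T`. -/
private lemma aux_mem_smul_of_flat_quotient {R M : Type*} [CommRing R] [AddCommGroup M]
    [Module R M] (T : Submodule R M) (hQ : Module.Flat R (M ⧸ T)) (I : Ideal R) {x : M}
    (hxT : x ∈ T) (hxI : x ∈ I • (⊤ : Submodule R M)) : x ∈ I • T := by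
  set mV : I ⊗[R] M →ₗ[R] M :=
    (TensorProduct.lid R M).toLinearMap ∘ₗ rTensor M I.subtype with hmVdef
  set mQ : I ⊗[R] (M ⧸ T) →ₗ[R] (M ⧸ T) :=
    (TensorProduct.lid R (M ⧸ T)).toLinearMap ∘ₗ rTensor (M ⧸ T) I.subtype with hmQdef
  have hsur : ∀ y ∈ I • (⊤ : Submodule R M), ∃ ξ : I ⊗[R] M, mV ξ = y := by
    intro y hy
    refine Submodule.smul_induction_on hy ?_ ?_
    · intro c hc m _
      exact ⟨(⟨c, hc⟩ : I) ⊗ₜ m, by simp [hmVdef]⟩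
    · rintro y z ⟨ξ, rfl⟩ ⟨η, rfl⟩
      exact ⟨ξ + η, by rw [map_add]⟩
  obtain ⟨ξ, hξ⟩ := hsur x hxI
  have hinjQ : Function.Injective (rTensor (M ⧸ T) I.subtype) :=
    Module.Flat.iff_rTensor_injective'.mp hQ I
  have hmQinj : Function.Injective mQ := by
    rw [hmQdef]
    exact (TensorProduct.lid R (M ⧸ T)).injective.comp hinjQ
  have hcomm : mQ ∘ₗ lTensor I T.mkQ = T.mkQ ∘ₗ mV := by
    apply TensorProduct.ext'
    intro c v
    simp [hmQdef, hmVdef]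
  have h0 : lTensor I T.mkQ ξ = 0 := by
    apply hmQinj
    have : mQ (lTensor I T.mkQ ξ) = T.mkQ (mV ξ) := by
      have := congrArg (fun g => g ξ) hcomm
      simpa using this
    rw [this, hξ, map_zero]
    exact (Submodule.Quotient.mk_eq_zero T).mpr hxT
  have hex := lTensor_exact I (LinearMap.exact_subtype_mkQ T) (Submodule.mkQ_surjective T)
  obtain ⟨η, hη⟩ := (hex ξ).mp h0
  have hmem : ∀ η : I ⊗[R] T, mV (lTensor I T.subtype η) ∈ I • T := by
    intro η
    induction η using TensorProduct.induction_on with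
    | zero => simp
    | tmul c t =>
      simp only [lTensor_tmul, hmVdef, LinearMap.coe_comp, Function.comp_apply,
        rTensor_tmul, LinearEquiv.coe_coe, Submodule.coe_subtype, lid_tmul]
      exact Submodule.smul_mem_smul c.2 t.2
    | add a b ha hb => rw [map_add, map_add]; exact add_mem ha hb
  rw [← hξ, ← hη]
  exact hmem η

/-- Let `R` be a Dedekind domain, `A` a Noetherian `R`-algebra, `V` a finitely generated
`A`-module, `N` a torsion-free `R`-module, and `φ : V → N` an `R`-linear map such that for
every maximal ideal `𝔪` of `R` the induced map `V/𝔪V → N/𝔪N` is injective. Then `V` is a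
flat `R`-module. -/
theorem flat_of_injective_mod_maximal
    {R A V N : Type*} [CommRing R] [IsDomain R] [IsDedekindDomain R]
    [CommRing A] [Algebra R A] [IsNoetherianRing A]
    [AddCommGroup V] [Module R V] [Module A V] [IsScalarTower R A V] [Module.Finite A V]
    [AddCommGroup N] [Module R N]
    (hN : ∀ (r : R) (x : N), r • x = 0 → r = 0 ∨ x = 0)
    (φ : V →ₗ[R] N)
    (hinj : ∀ (𝔪 : Ideal R), 𝔪.IsMaximal →
      ∀ v : V, φ v ∈ (𝔪 • ⊤ : Submodule R N) → v ∈ (𝔪 • ⊤ : Submodule R V)) :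
    Module.Flat R V := by
  classical
  -- the torsion submodule, as an `A`-submodule
  let T : Submodule A V :=
    { carrier := {v | ∃ r : R, r ≠ 0 ∧ r • v = 0}
      add_mem' := by
        rintro x y ⟨r, hr, hrx⟩ ⟨s, hs, hsy⟩
        refine ⟨r * s, mul_ne_zero hr hs, ?_⟩
        have h1 : (r * s) • x = 0 := by rw [mul_comm, mul_smul, hrx, smul_zero]
        have h2 : (r * s) • y = 0 := by rw [mul_smul, hsy, smul_zero]
        rw [smul_add, h1, h2, add_zero]
      zero_mem' := ⟨1, one_ne_zero, smul_zero 1⟩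
      smul_mem' := by
        rintro a v ⟨r, hr, hrv⟩
        exact ⟨r, hr, by rw [smul_comm, hrv, smul_zero]⟩ }
  have hTtor : ∀ v ∈ T, ∃ r : R, r ≠ 0 ∧ r • v = 0 := fun v hv => hv
  have hT : T = ⊥ := by
    by_contra hne
    have hKtop : T.annihilator ≠ ⊤ := by
      intro h
      apply hne
      rw [eq_bot_iff]
      intro t ht
      have h1 : (1 : A) ∈ T.annihilator := h ▸ Submodule.mem_top
      have := Submodule.mem_annihilator.mp h1 t ht
      simpa using this
    obtain ⟨P, hPmax, hKP⟩ := Ideal.exists_le_maximal _ hKtop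
    have hTfg : T.FG := IsNoetherian.noetherian T
    -- find a nonzero `r : R` annihilating `T`
    obtain ⟨s, hsspan⟩ := id hTfg
    have hws : ∀ v : {x // x ∈ s}, ∃ r : R, r ≠ 0 ∧ r • (v : V) = 0 := by
      intro v
      exact hTtor v (hsspan ▸ Submodule.subset_span v.2)
    choose w hw0 hw1 using hws
    set r : R := ∏ v ∈ s.attach, w v with hrdef
    have hrne : r ≠ 0 := Finset.prod_ne_zero_iff.mpr fun v _ => hw0 v
    have hrs : ∀ v ∈ s, r • v = 0 := by
      intro v hv
      have hmem : (⟨v, hv⟩ : {x // x ∈ s}) ∈ s.attach := Finset.mem_attach _ _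
      rw [hrdef, ← Finset.mul_prod_erase _ _ hmem, mul_comm, mul_smul, hw1 ⟨v, hv⟩, smul_zero]
    have hrT : ∀ t ∈ T, r • t = 0 := by
      have : T ≤
          { carrier := {v | r • v = 0}
            add_mem' := by
              intro x y hx hy
              simp only [Set.mem_setOf_eq] at *
              rw [smul_add, hx, hy, add_zero]
            zero_mem' := smul_zero r
            smul_mem' := by
              intro a v hv
              simp only [Set.mem_setOf_eq] at *
              rw [smul_comm, hv, smul_zero] } := by
        rw [← hsspan]
        exact Submodule.span_le.mpr fun v hv => hrs v hv
      exact fun t ht => this ht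
    set p : Ideal R := P.comap (algebraMap R A) with hpdef
    have hrp : r ∈ p := by
      have : algebraMap R A r ∈ T.annihilator := by
        rw [Submodule.mem_annihilator]
        intro t ht
        rw [algebraMap_smul]
        exact hrT t ht
      exact hKP this
    have hpprime : p.IsPrime := Ideal.IsPrime.comap _
    have hpbot : p ≠ ⊥ := by
      intro h
      rw [h] at hrp
      exact hrne (by simpa using hrp)
    have hpmax : p.IsMaximal := Ideal.IsPrime.isMaximal hpprime hpbot
    set TR : Submodule R V := T.restrictScalars R with hTRdef
    have hTle : ∀ t ∈ T, t ∈ p • (⊤ : Submodule R V) := by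
      intro t ht
      obtain ⟨c, hc0, hct⟩ := hTtor t ht
      have hφt : φ t = 0 := by
        have : c • φ t = 0 := by rw [← map_smul, hct, map_zero]
        exact (hN c (φ t) this).resolve_left hc0
      exact hinj p hpmax t (by rw [hφt]; exact Submodule.zero_mem _)
    have hQtf : ∀ (c : R) (y : V ⧸ TR), c • y = 0 → c = 0 ∨ y = 0 := by
      intro c y hcy
      rcases eq_or_ne c 0 with rfl | hc
      · exact Or.inl rfl
      · right
        obtain ⟨v, rfl⟩ := Submodule.mkQ_surjective TR y
        have hcv : c • v ∈ TR := by
          rw [← Submodule.Quotient.mk_eq_zero, Submodule.Quotient.mk_smul]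
          rw [Submodule.mkQ_apply] at hcy
          exact hcy
        obtain ⟨cc, hcc0, hccv⟩ := hTtor _ hcv
        have hvT : v ∈ T := ⟨cc * c, mul_ne_zero hcc0 hc, by rw [mul_smul]; exact hccv⟩
        rw [Submodule.mkQ_apply]
        exact (Submodule.Quotient.mk_eq_zero _).mpr hvT
    have hQflat : Module.Flat R (V ⧸ TR) := flat_of_torsionfree' hQtf
    have hsm : ∀ t ∈ T, t ∈ p • TR := fun t ht =>
      aux_mem_smul_of_flat_quotient TR hQflat p ht (hTle t ht)
    have hle : T ≤ (p.map (algebraMap R A)) • T := by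
      intro t ht
      obtain ⟨n, a, v, hap, hvT, rfl⟩ := aux_smul_rep (hsm t ht)
      refine Submodule.sum_mem _ fun i _ => ?_
      rw [← algebraMap_smul A (a i)]
      exact Submodule.smul_mem_smul (Ideal.mem_map_of_mem _ (hap i)) (hvT i)
    obtain ⟨u, hu1, hu0⟩ :=
      Submodule.exists_sub_one_mem_and_smul_eq_zero_of_fg_of_le_smul _ T hTfg hle
    have huP : u ∈ P := hKP (Submodule.mem_annihilator.mpr hu0)
    have hmapP : p.map (algebraMap R A) ≤ P := Ideal.map_comap_le
    have h1P : (1 : A) ∈ P := by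
      have := P.sub_mem huP (hmapP hu1)
      simpa using this
    exact hPmax.ne_top ((Ideal.eq_top_iff_one P).mpr h1P)
  apply flat_of_torsionfree'
  intro c v hcv
  rcases eq_or_ne c 0 with rfl | hc
  · exact Or.inl rfl
  · right
    have : v ∈ T := ⟨c, hc, hcv⟩
    rw [hT] at this
    simpa using this
end

section
/- Let K be an algebraically closed field, m, n nonnegative integers, and u ≤ min(m, n). Every polynomial f in the polynomial ring K[x_{ij}] (1 ≤ i ≤ m, 1 ≤ j ≤ n) that vanishes at every m × n matrix over K of rank exactly u also vanishes at every m × n matrix over K of rank at most u. Equivalently, the set of matrices of rank exactly u is Zariski dense in the determinantal variety of matrices of rank at most u. -/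
open Matrix MvPolynomial Module

/-- Key step: perturbing a matrix by `t • E_{ij}` (with suitable `i`, `j`) raises the
rank by one, for every `t ≠ 0`. -/
lemma rank_add_stdBasisMatrix {K : Type*} [Field K] {m n : ℕ}
    (A : Matrix (Fin m) (Fin n) K) (i : Fin m)
    (hi : Pi.single i (1 : K) ∉ LinearMap.range A.mulVecLin)
    (v : Fin n → K) (hv : A.mulVec v = 0) (j : Fin n) (hvj : v j ≠ 0)
    (t : K) (ht : t ≠ 0) :
    (A + Matrix.single i j t).rank = A.rank + 1 := by
  classical
  set B := A + Matrix.single i j t with hB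
  have hBmul : ∀ w : Fin n → K,
      B.mulVec w = A.mulVec w + (t * w j) • (Pi.single i 1 : Fin m → K) := by
    intro w
    rw [hB, add_mulVec, single_mulVec]
    congr 1
    funext k
    by_cases hk : k = i
    · subst hk; simp
    · simp [Function.update_apply, Pi.single_apply, hk]
  have hrange : LinearMap.range B.mulVecLin
      = LinearMap.range A.mulVecLin ⊔ (K ∙ Pi.single i (1 : K)) := by
    apply le_antisymm
    · rintro x ⟨w, rfl⟩
      rw [mulVecLin_apply, hBmul]
      exact Submodule.add_mem _
        (Submodule.mem_sup_left ⟨w, rfl⟩)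
        (Submodule.mem_sup_right (Submodule.smul_mem _ _ (Submodule.mem_span_singleton_self _)))
    · have hsingle : Pi.single i (1 : K) ∈ LinearMap.range B.mulVecLin := by
        refine ⟨(t * v j)⁻¹ • v, ?_⟩
        rw [mulVecLin_apply, mulVec_smul, hBmul, hv, smul_add, smul_zero, zero_add,
          smul_smul]
        rw [inv_mul_cancel₀ (mul_ne_zero ht hvj), one_smul]
      refine sup_le ?_ ?_
      · rintro x ⟨w, rfl⟩
        have : A.mulVec w = B.mulVec (w - (w j / v j) • v) := by
          rw [hBmul, mulVec_sub, mulVec_smul, hv, smul_zero, sub_zero]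
          have : w j - w j / v j * v j = 0 := by field_simp; ring
          simp [Pi.sub_apply, Pi.smul_apply, smul_eq_mul, this]
        rw [mulVecLin_apply, this]
        exact ⟨_, rfl⟩
      · rw [Submodule.span_singleton_le_iff_mem]
        exact hsingle
  have hne : (Pi.single i 1 : Fin m → K) ≠ 0 := by
    intro h
    have := congrFun h i
    simp at this
  have hlt : LinearMap.range A.mulVecLin < LinearMap.range B.mulVecLin := by
    rw [hrange]
    refine lt_of_le_of_ne le_sup_left ?_
    intro h
    exact hi (h ▸ Submodule.mem_sup_right (Submodule.mem_span_singleton_self _))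
  have hle : finrank K (LinearMap.range B.mulVecLin)
      ≤ finrank K (LinearMap.range A.mulVecLin) + 1 := by
    rw [hrange]
    have h2 := Submodule.finrank_sup_add_finrank_inf_eq
      (LinearMap.range A.mulVecLin) (Submodule.span K {(Pi.single i 1 : Fin m → K)})
    have h3 : finrank K (Submodule.span K {(Pi.single i 1 : Fin m → K)}) = 1 :=
      finrank_span_singleton hne
    omega
  have hgt : finrank K (LinearMap.range A.mulVecLin)
      < finrank K (LinearMap.range B.mulVecLin) :=
    Submodule.finrank_lt_finrank_of_lt hlt
  show finrank K (LinearMap.range B.mulVecLin) = finrank K (LinearMap.range A.mulVecLin) + 1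
  omega

/-- Step lemma: if `f` vanishes on all matrices of rank `r + 1 ≤ min m n`, it vanishes on
all matrices of rank `r`. -/
lemma step_lemma {K : Type*} [Field K] [IsAlgClosed K] {m n r : ℕ}
    (hr : r + 1 ≤ min m n)
    (f : MvPolynomial (Fin m × Fin n) K)
    (h : ∀ A : Matrix (Fin m) (Fin n) K, A.rank = r + 1 →
      MvPolynomial.eval (fun p => A p.1 p.2) f = 0) :
    ∀ A : Matrix (Fin m) (Fin n) K, A.rank = r →
      MvPolynomial.eval (fun p => A p.1 p.2) f = 0 := by
  classical
  intro A hA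
  -- find a standard basis vector outside the column space
  obtain ⟨i, hi⟩ : ∃ i : Fin m, Pi.single i (1 : K) ∉ LinearMap.range A.mulVecLin := by
    by_contra hcon
    push_neg at hcon
    have htop : LinearMap.range A.mulVecLin = ⊤ := by
      rw [eq_top_iff]
      intro x _
      have hx : x = ∑ k : Fin m, Pi.single k (x k) := (Finset.univ_sum_single x).symm
      rw [hx]
      refine Submodule.sum_mem _ fun k _ => ?_
      have : Pi.single k (x k) = x k • (Pi.single k 1 : Fin m → K) := by
        funext l
        simp [Pi.single_apply, mul_ite]
      rw [this]
      exact Submodule.smul_mem _ _ (hcon k)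
    have : A.rank = m := by
      rw [Matrix.rank, htop, finrank_top, finrank_pi]
      simp
    omega
  -- find a kernel vector with a nonzero coordinate
  obtain ⟨v, hv, hvne⟩ : ∃ v : Fin n → K, A.mulVec v = 0 ∧ v ≠ 0 := by
    have hrn : finrank K (LinearMap.range A.mulVecLin)
        + finrank K (LinearMap.ker A.mulVecLin) = n := by
      have := LinearMap.finrank_range_add_finrank_ker A.mulVecLin
      rwa [finrank_pi, Fintype.card_fin] at this
    have hker : finrank K (LinearMap.ker A.mulVecLin) ≠ 0 := by
      have : A.rank = finrank K (LinearMap.range A.mulVecLin) := rfl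
      omega
    have hbot : LinearMap.ker A.mulVecLin ≠ ⊥ := by
      intro hb
      rw [hb, finrank_bot] at hrn
      have : A.rank = finrank K (LinearMap.range A.mulVecLin) := rfl
      omega
    obtain ⟨v, hv, hvne⟩ := Submodule.exists_mem_ne_zero_of_ne_bot hbot
    exact ⟨v, LinearMap.mem_ker.mp hv, hvne⟩
  obtain ⟨j, hvj⟩ : ∃ j, v j ≠ 0 := Function.ne_iff.mp hvne
  -- the one-parameter family as a polynomial in `t`
  set g : Polynomial K := MvPolynomial.eval₂ Polynomial.C
    (fun p => Polynomial.C (A p.1 p.2) + Polynomial.C (Matrix.single i j (1:K) p.1 p.2)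
      * Polynomial.X) f with hg
  have hgeval : ∀ t : K, g.eval t
      = MvPolynomial.eval (fun p => (A + Matrix.single i j t) p.1 p.2) f := by
    intro t
    rw [hg]
    rw [show (Polynomial.eval t : Polynomial K → K)
      = (Polynomial.evalRingHom t : Polynomial K →+* K) from rfl]
    rw [MvPolynomial.eval₂_comp_left (Polynomial.evalRingHom t)]
    rw [← MvPolynomial.eval₂_id]
    congr 1
    · ext x; simp
    · funext p
      simp only [Function.comp_apply, Polynomial.coe_evalRingHom, Polynomial.eval_add,
        Polynomial.eval_mul, Polynomial.eval_C, Polynomial.eval_X, Matrix.add_apply,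
        Matrix.single, Matrix.of_apply]
      split <;> ring
  have hroots : ∀ t : K, t ≠ 0 → g.eval t = 0 := by
    intro t ht
    rw [hgeval t]
    exact h _ (by rw [rank_add_stdBasisMatrix A i hi v hv j hvj t ht, hA])
  have hg0 : g = 0 := by
    apply Polynomial.eq_zero_of_infinite_isRoot
    apply Set.Infinite.mono (s := {(0 : K)}ᶜ)
    · intro t ht
      exact hroots t ht
    · exact Set.Finite.infinite_compl (Set.finite_singleton 0)
  have := hgeval 0
  rw [hg0] at this
  simp only [Polynomial.eval_zero] at this
  have h0 : A + Matrix.single i j (0:K) = A := by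
    simp
  rw [h0] at this
  exact this.symm

/-- Let `K` be an algebraically closed field and `u ≤ min m n`. Every polynomial in the
entries of a generic `m × n` matrix that vanishes at every matrix of rank exactly `u`
also vanishes at every matrix of rank at most `u`: the matrices of rank exactly `u` are
dense in the determinantal variety of matrices of rank at most `u`. -/
theorem vanish_on_rank_le_of_vanish_on_rank_eq
    {K : Type*} [Field K] [IsAlgClosed K] (m n u : ℕ) (hu : u ≤ min m n)
    (f : MvPolynomial (Fin m × Fin n) K)
    (hf : ∀ A : Matrix (Fin m) (Fin n) K, A.rank = u →
      MvPolynomial.eval (fun p => A p.1 p.2) f = 0) :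
    ∀ A : Matrix (Fin m) (Fin n) K, A.rank ≤ u →
      MvPolynomial.eval (fun p => A p.1 p.2) f = 0 := by
  have key : ∀ k : ℕ, ∀ A : Matrix (Fin m) (Fin n) K, A.rank + k = u →
      MvPolynomial.eval (fun p => A p.1 p.2) f = 0 := by
    intro k
    induction k with
    | zero => intro A hA; exact hf A (by omega)
    | succ k ih =>
      intro A hA
      have hr : A.rank + 1 ≤ min m n := by omega
      exact step_lemma hr f (fun B hB => ih B (by omega)) A rfl
  intro A hA
  exact key (u - A.rank) A (by omega)
end
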